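/- Let q be a prime power, m a positive integer, B = {α₁,...,α_m} a basis of F_{q^m} over F_q, and B' = {β₁,...,β_m} its dual basis with respect to the trace form (i.e., Tr_{F_{q^m}/F_q}(α_i β_j) = 1 if i = j and 0 otherwise). Let Φ_B : F_{q^m}^n → F_q^{mn} be the F_q-linear map expanding each coordinate in the basis B, and Φ_{B'} the analogous map for B'. Then for any F_{q^m}-linear code C ⊆ F_{q^m}^n, the image of the (Euclidean) dual code satisfies Φ_{B'}(C^⊥) = (Φ_B(C))^⊥, where the dual on the right is taken with respect to the standard bilinear form on F_q^{mn}. -/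

import Mathlib

/-- The Euclidean dual of a (not necessarily linear) code, as a set. -/
def dualCode {F ι : Type*} [Field F] [Fintype ι] (C : Set (ι → F)) : Set (ι → F) :=
  {y | ∀ x ∈ C, ∑ i, x i * y i = 0}

/-- Coordinatewise expansion of vectors over `L` into vectors over `K` with
respect to a basis `B` of `L` over `K`. -/
noncomputable def expand {K L : Type*} [Field K] [Field L] [Algebra K L] {m n : ℕ}
    (B : Module.Basis (Fin m) K L) (x : Fin n → L) : Fin n × Fin m → K :=
  fun p => B.repr (x p.1) p.2

lemma key {K L : Type} [Field K] [Field L] [Algebra K L] {m : ℕ}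
    (B B' : Module.Basis (Fin m) K L)
    (hdual : ∀ i j, Algebra.trace K L (B i * B' j) = if i = j then 1 else 0)
    (a b : L) : ∑ j, B.repr a j * B'.repr b j = Algebra.trace K L (a * b) := by
  conv_rhs => rw [← B.sum_repr a, ← B'.sum_repr b]
  rw [Finset.sum_mul]
  simp only [Finset.mul_sum, smul_mul_assoc, mul_smul_comm, map_sum, map_smul, hdual,
    smul_eq_mul, mul_ite, mul_one, mul_zero]
  simp [Finset.sum_ite_eq, mul_comm]

/-- if `B'` is the trace-dual basis of `B`, then for any `L`-linear
code `C`, `Φ_{B'}(C^⊥) = (Φ_B C)^⊥`. -/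
theorem stmt0 (p e m n : ℕ) (hp : p.Prime) (he : 0 < e) (hm : 0 < m)
    (K L : Type) [Field K] [Field L] [Fintype K] [Fintype L] [Algebra K L]
    (hcard : Fintype.card K = p ^ e) (hdim : Module.finrank K L = m)
    (B B' : Module.Basis (Fin m) K L)
    (hdual : ∀ i j, Algebra.trace K L (B i * B' j) = if i = j then 1 else 0)
    (C : Submodule L (Fin n → L)) :
    expand B' '' dualCode (C : Set (Fin n → L)) = dualCode (expand B '' (C : Set (Fin n → L))) := by
  have keysum : ∀ x y : Fin n → L,
      ∑ q : Fin n × Fin m, expand B x q * expand B' y q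
        = Algebra.trace K L (∑ i, x i * y i) := by
    intro x y
    rw [map_sum, Fintype.sum_prod_type]
    exact Finset.sum_congr rfl fun i _ => key B B' hdual (x i) (y i)
  ext z
  constructor
  · rintro ⟨y, hy, rfl⟩
    intro u hu
    rcases hu with ⟨x, hx, rfl⟩
    rw [keysum x y, hy x hx, map_zero]
  · intro hz
    set y : Fin n → L := fun i => ∑ j, z (i, j) • B' j with hy
    have hexp : expand B' y = z := by
      funext q
      simp [expand, hy, Finsupp.single_apply]
    refine ⟨y, ?_, hexp⟩
    intro x hx
    -- know: for all c : L, trace (c * ∑ x i * y i) = 0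
    have htr : ∀ c : L, Algebra.trace K L (c * ∑ i, x i * y i) = 0 := by
      intro c
      have hcx : c • x ∈ C := C.smul_mem c hx
      have := hz (expand B (c • x)) ⟨c • x, hcx, rfl⟩
      rw [← hexp, keysum (c • x) y] at this
      simpa [Finset.mul_sum, mul_assoc] using this
    set s := ∑ i, x i * y i with hs
    have hcoord : ∀ j, B'.repr s j = 0 := by
      intro j
      have := key B B' hdual (B j) s
      rw [htr (B j)] at this
      simp only [Module.Basis.repr_self] at this
      rw [← this]
      simp [Finsupp.single_apply]
    have : B'.repr s = 0 := Finsupp.ext hcoord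
    have : s = 0 := by
      have := congrArg B'.repr.symm this
      simpa using this
    exact this
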